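/- Let E and F be semilattices with zero and let h : E → F be a homomorphism of semilattices with zero such that ψ ∘ h is nonzero for every tight character ψ on F. Then the following are equivalent: (i) for every tight character ψ on F, the composition ψ ∘ h is a tight character on E; (ii) whenever {e₁,…,e_n} is a cover for e ∈ E, the set {h(e₁),…,h(e_n)} is a cover for h(e). -/

import Mathlib

/-- A finite subset `C` is a cover for `f`: every `c ∈ C` satisfies `c ≤ f` and every
nonzero `g ≤ f` meets some `c ∈ C`. -/
def IsCover {E : Type*} [SemilatticeInf E] [OrderBot E] (C : Finset E) (f : E) : Prop :=
  (∀ c ∈ C, c ≤ f) ∧ ∀ g : E, g ≠ ⊥ → g ≤ f → ∃ c ∈ C, g ⊓ c ≠ ⊥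

/-- The (finite) family `{v i : i ∈ C}` is a cover for `f`. -/
def IsCoverFam {ι : Type*} {E : Type*} [SemilatticeInf E] [OrderBot E]
    (C : Finset ι) (v : ι → E) (f : E) : Prop :=
  (∀ i ∈ C, v i ≤ f) ∧ ∀ g : E, g ≠ ⊥ → g ≤ f → ∃ i ∈ C, g ⊓ v i ≠ ⊥

/-- A character on a semilattice with zero: a multiplicative `{0,1}`-valued map sending
`0` to `0` and not identically zero. -/
def IsChar {E : Type*} [SemilatticeInf E] [OrderBot E] (φ : E → Bool) : Prop :=
  φ ⊥ = false ∧ (∀ e f : E, φ (e ⊓ f) = (φ e && φ f)) ∧ ∃ e : E, φ e = true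

/-- A tight character: a character such that, for every `f` and every cover `C` for `f`,
`φ f = max_{c ∈ C} φ c`. -/
def IsTightChar {E : Type*} [SemilatticeInf E] [OrderBot E] (φ : E → Bool) : Prop :=
  IsChar φ ∧ ∀ f : E, ∀ C : Finset E, IsCover C f → (φ f = true ↔ ∃ c ∈ C, φ c = true)

/-- A filter on a semilattice with zero. -/
def IsFilterOn {E : Type*} [SemilatticeInf E] [OrderBot E] (ξ : Set E) : Prop :=
  ξ.Nonempty ∧ ⊥ ∉ ξ ∧ (∀ e ∈ ξ, ∀ f ∈ ξ, e ⊓ f ∈ ξ) ∧ ∀ e ∈ ξ, ∀ f : E, e ≤ f → f ∈ ξ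

/-- A tight filter: whenever `C` is a cover for some `f ∈ ξ`, some element of `C` lies in `ξ`. -/
def IsTightFilter {E : Type*} [SemilatticeInf E] [OrderBot E] (ξ : Set E) : Prop :=
  IsFilterOn ξ ∧ ∀ f ∈ ξ, ∀ C : Finset E, IsCover C f → ∃ c ∈ C, c ∈ ξ

/-- The tight order: `e` is tightly below `f` iff there is no nonzero `g ≤ e` with `g ⊓ f = ⊥`. -/
def TightBelow {E : Type*} [SemilatticeInf E] [OrderBot E] (e f : E) : Prop :=
  ¬ ∃ g : E, g ≠ ⊥ ∧ g ≤ e ∧ g ⊓ f = ⊥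

/-- Tight equivalence. -/
def TightEquiv {E : Type*} [SemilatticeInf E] [OrderBot E] (e f : E) : Prop :=
  TightBelow e f ∧ TightBelow f e

/-- A homomorphism is tightly injective if it reflects tight equivalence. -/
def TightlyInjective {E F : Type*} [SemilatticeInf E] [OrderBot E] [SemilatticeInf F] [OrderBot F]
    (h : E → F) : Prop :=
  ∀ e₁ e₂ : E, TightEquiv (h e₁) (h e₂) → TightEquiv e₁ e₂

/-- A homomorphism is tightly surjective if its range is a large subset of the codomain:
for every `f` there is a finite `C ⊆ E` with `h e ≼ f` for all `e ∈ C` and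
`{f ⊓ h e : e ∈ C}` a cover for `f`. -/
def TightlySurjective {E F : Type*} [SemilatticeInf E] [OrderBot E] [SemilatticeInf F] [OrderBot F]
    (h : E → F) : Prop :=
  ∀ f : F, ∃ C : Finset E, (∀ e ∈ C, TightBelow (h e) f) ∧ IsCoverFam C (fun e => f ⊓ h e) f

/-- A homomorphism of semilattices with zero is tight if it satisfies conditions
(4.1.ii) and (4.3.ii) of the paper. -/
def IsTightHom {E F : Type*} [SemilatticeInf E] [OrderBot E] [SemilatticeInf F] [OrderBot F]
    (h : E → F) : Prop :=
  (∀ f : F, ∃ C : Finset E, IsCoverFam C (fun e => f ⊓ h e) f) ∧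
  (∀ e : E, ∀ C : Finset E, IsCover C e → IsCoverFam C h (h e))

/-- Every nonzero element lies in "the support of" some tight character. -/
lemma exists_tight_char_mem {F : Type*} [SemilatticeInf F] [OrderBot F]
    (g : F) (hg : g ≠ ⊥) : ∃ ψ : F → Bool, IsTightChar ψ ∧ ψ g = true := by
  classical
  -- Zorn's lemma: get a filter maximal among those containing g
  set S : Set (Set F) := {ξ | IsFilterOn ξ ∧ g ∈ ξ} with hS
  have hup : {f : F | g ≤ f} ∈ S := by
    refine ⟨⟨⟨g, le_refl g⟩, ?_, ?_, ?_⟩, le_refl g⟩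
    · intro hb; exact hg (le_bot_iff.mp hb)
    · intro a ha b hb; exact le_inf ha hb
    · intro a ha b hab; exact le_trans ha hab
  obtain ⟨ξ, hsub, hξS, hmax⟩ := zorn_subset_nonempty S (fun c hc hchain hne => by
    refine ⟨⋃₀ c, ⟨⟨?_, ?_, ?_, ?_⟩, ?_⟩, fun s hs => Set.subset_sUnion_of_mem hs⟩
    · obtain ⟨t, ht⟩ := hne
      obtain ⟨⟨⟨x, hx⟩, _, _, _⟩, _⟩ := hc ht
      exact ⟨x, Set.mem_sUnion.mpr ⟨t, ht, hx⟩⟩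
    · rintro ⟨t, ht, hbt⟩
      exact (hc ht).1.2.1 hbt
    · rintro a ⟨t, ht, hat⟩ b ⟨u, hu, hbu⟩
      rcases hchain.total ht hu with htu | hut
      · exact ⟨u, hu, (hc hu).1.2.2.1 a (htu hat) b hbu⟩
      · exact ⟨t, ht, (hc ht).1.2.2.1 a hat b (hut hbu)⟩
    · rintro a ⟨t, ht, hat⟩ f haf
      exact ⟨t, ht, (hc ht).1.2.2.2 a hat f haf⟩
    · obtain ⟨t, ht⟩ := hne
      exact ⟨t, ht, (hc ht).2⟩) _ hup
  obtain ⟨hfil, hgξ⟩ := hξS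
  -- maximality: if c ∉ ξ then some x ∈ ξ has x ⊓ c = ⊥
  have hkey : ∀ c : F, c ∉ ξ → ∃ x ∈ ξ, x ⊓ c = ⊥ := by
    intro c hc
    by_contra hcon
    push_neg at hcon
    set ξ' : Set F := {y | ∃ x ∈ ξ, x ⊓ c ≤ y} with hξ'
    have hsub' : ξ ⊆ ξ' := fun x hx => ⟨x, hx, inf_le_left⟩
    have hξ'S : ξ' ∈ S := by
      refine ⟨⟨⟨c, ?_⟩, ?_, ?_, ?_⟩, hsub' hgξ⟩
      · obtain ⟨x, hx⟩ := hfil.1; exact ⟨x, hx, inf_le_right⟩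
      · rintro ⟨x, hx, hxc⟩
        exact hcon x hx (le_bot_iff.mp hxc)
      · rintro a ⟨x, hx, hxa⟩ b ⟨y, hy, hyb⟩
        refine ⟨x ⊓ y, hfil.2.2.1 x hx y hy, ?_⟩
        exact le_inf (le_trans (inf_le_inf_right c inf_le_left) hxa)
          (le_trans (inf_le_inf_right c inf_le_right) hyb)
      · rintro a ⟨x, hx, hxa⟩ f haf
        exact ⟨x, hx, le_trans hxa haf⟩
    have : ξ' = ξ := le_antisymm (hmax hξ'S hsub') hsub'
    apply hc
    rw [← this]
    obtain ⟨x, hx⟩ := hfil.1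
    exact ⟨x, hx, inf_le_right⟩
  -- ξ is tight: for any finite set of non-members, some x ∈ ξ kills them all
  have hkill : ∀ C : Finset F, (∀ c ∈ C, c ∉ ξ) → ∃ x ∈ ξ, ∀ c ∈ C, x ⊓ c = ⊥ := by
    intro C
    induction C using Finset.induction_on with
    | empty => intro _; obtain ⟨x, hx⟩ := hfil.1; exact ⟨x, hx, fun c hc => absurd hc (by simp)⟩
    | insert _ _ hni ih =>
      rename_i c C'
      intro hC
      obtain ⟨x, hx, hxkill⟩ := ih (fun d hd => hC d (Finset.mem_insert_of_mem hd))
      obtain ⟨y, hy, hyc⟩ := hkey c (hC c (Finset.mem_insert_self c C'))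
      refine ⟨x ⊓ y, hfil.2.2.1 x hx y hy, fun d hd => ?_⟩
      rcases Finset.mem_insert.mp hd with rfl | hd'
      · exact le_bot_iff.mp (le_trans (inf_le_inf_right d inf_le_right) hyc.le)
      · exact le_bot_iff.mp (le_trans (inf_le_inf_right d inf_le_left) (hxkill d hd').le)
  refine ⟨fun f => decide (f ∈ ξ), ⟨⟨by simp [hfil.2.1], ?_, ?_⟩, ?_⟩, by simp [hgξ]⟩
  · intro a b
    simp only [decide_eq_true_eq, Bool.and_eq_true]
    by_cases hab : a ⊓ b ∈ ξ
    · simp [hab, hfil.2.2.2 _ hab a inf_le_left, hfil.2.2.2 _ hab b inf_le_right]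
    · have : ¬ (a ∈ ξ ∧ b ∈ ξ) := fun ⟨ha, hb⟩ => hab (hfil.2.2.1 a ha b hb)
      simp only [decide_eq_false hab]
      rcases not_and_or.mp this with hna | hnb
      · simp [hna]
      · simp [hnb]
  · obtain ⟨x, hx⟩ := hfil.1; exact ⟨x, by simp [hx]⟩
  · intro f C hC
    simp only [decide_eq_true_eq]
    constructor
    · intro hf
      by_contra hcon
      push_neg at hcon
      obtain ⟨x, hx, hxkill⟩ := hkill C hcon
      have hxf : x ⊓ f ∈ ξ := hfil.2.2.1 x hx f hf
      have hne : x ⊓ f ≠ ⊥ := fun hb => hfil.2.1 (hb ▸ hxf)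
      obtain ⟨c, hc, hgc⟩ := hC.2 (x ⊓ f) hne inf_le_right
      exact hgc (le_bot_iff.mp (le_trans (inf_le_inf_right c inf_le_left) (hxkill c hc).le))
    · rintro ⟨c, hc, hcξ⟩
      exact hfil.2.2.2 c hcξ f (hC.1 c hc)

/-- Let `h : E → F` be a homomorphism of semilattices with zero such that
`ψ ∘ h` is nonzero for every tight character `ψ` on `F`. Then the following are
equivalent: (i) for every tight character `ψ` on `F`, `ψ ∘ h` is a tight character on `E`;
(ii) whenever `C` is a cover for `e ∈ E`, the family `{h c : c ∈ C}` is a cover for `h e`. -/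
theorem tight_cond_two_iff {E F : Type*} [SemilatticeInf E] [OrderBot E]
    [SemilatticeInf F] [OrderBot F]
    (h : E → F) (h0 : h ⊥ = ⊥) (hinf : ∀ a b : E, h (a ⊓ b) = h a ⊓ h b)
    (hnz : ∀ ψ : F → Bool, IsTightChar ψ → ∃ e : E, ψ (h e) = true) :
    (∀ ψ : F → Bool, IsTightChar ψ → IsTightChar (fun e => ψ (h e))) ↔
    (∀ e : E, ∀ C : Finset E, IsCover C e → IsCoverFam C h (h e)) := by
  classical
  have hmono : ∀ a b : E, a ≤ b → h a ≤ h b := by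
    intro a b hab
    have : a ⊓ b = a := inf_eq_left.mpr hab
    calc h a = h (a ⊓ b) := by rw [this]
    _ = h a ⊓ h b := hinf a b
    _ ≤ h b := inf_le_right
  constructor
  · -- (i) → (ii)
    intro hi e C hC
    refine ⟨fun c hc => hmono c e (hC.1 c hc), ?_⟩
    by_contra hcon
    push_neg at hcon
    obtain ⟨g, hg, hgle, hgkill⟩ := hcon
    obtain ⟨ψ, hψ, hψg⟩ := exists_tight_char_mem g hg
    have hψhe : ψ (h e) = true := by
      have h2 := hψ.1.2.1 g (h e)
      rw [inf_eq_left.mpr hgle, hψg] at h2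
      cases hb : ψ (h e)
      · rw [hb] at h2; simp at h2
      · rfl
    have htc := (hi ψ hψ).2 e C hC
    obtain ⟨c, hc, hψhc⟩ := htc.mp hψhe
    have hψhc' : ψ (h c) = true := hψhc
    have hfalse : ψ (g ⊓ h c) = false := by rw [hgkill c hc]; exact hψ.1.1
    rw [hψ.1.2.1 g (h c), hψg, hψhc'] at hfalse
    simp at hfalse
  · -- (ii) → (i)
    intro hii ψ hψ
    refine ⟨⟨by show ψ (h ⊥) = false; rw [h0]; exact hψ.1.1,
      fun a b => by show ψ (h (a ⊓ b)) = _; rw [hinf]; exact hψ.1.2.1 _ _,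
      hnz ψ hψ⟩, ?_⟩
    intro e C hC
    have hcov := hii e C hC
    have hD : IsCover (C.image h) (h e) := by
      refine ⟨fun d hd => ?_, fun g hg hgle => ?_⟩
      · obtain ⟨c, hc, rfl⟩ := Finset.mem_image.mp hd
        exact hcov.1 c hc
      · obtain ⟨c, hc, hgc⟩ := hcov.2 g hg hgle
        exact ⟨h c, Finset.mem_image_of_mem h hc, hgc⟩
    have hiff := hψ.2 (h e) (C.image h) hD
    show ψ (h e) = true ↔ _
    rw [hiff]
    constructor
    · rintro ⟨d, hd, hψd⟩
      obtain ⟨c, hc, rfl⟩ := Finset.mem_image.mp hd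
      exact ⟨c, hc, hψd⟩
    · rintro ⟨c, hc, hψc⟩
      exact ⟨h c, Finset.mem_image_of_mem h hc, hψc⟩
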